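/- For every real s ≥ 1/2 there exists a constant C > 0 with the following property: for every function N₁ : ℤ³ → [0,∞) satisfying N₁(k₁,k₂,k₃) ≤ ⟨k₁⟩ · ( 𝟙[k₁+k₂=0] + 𝟙[k₁+k₃=0] ) for all integers k₁, k₂, k₃, and for all functions v₁, v₂, v₃ : ℤ → [0,∞): ( Σ_{k∈ℤ} ⟨k⟩^{2s} · ( Σ_{k₁+k₂+k₃ = k} N₁(k₁,k₂,k₃) · v₁(k₁)·v₂(k₂)·v₃(k₃) )² )^{1/2} ≤ C · Π_{l=1}^3 ( Σ_{k∈ℤ} ⟨k⟩^{2s} v_l(k)² )^{1/2}, where the inner sum ranges over all triples (k₁,k₂,k₃) ∈ ℤ³ with k₁+k₂+k₃ = k and all sums are interpreted in [0,∞]. -/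

import Mathlib

open scoped ENNReal NNReal BigOperators

open MeasureTheory

/-- The Japanese bracket `⟨k⟩ = (1+k²)^{1/2}`, as an extended nonnegative real. -/
noncomputable def J (k : ℤ) : ℝ≥0∞ := ENNReal.ofReal (Real.sqrt (1 + (k : ℝ) ^ 2))

lemma one_le_J (k : ℤ) : 1 ≤ J k := by
  have h1 : (1:ℝ) ≤ Real.sqrt (1 + (k:ℝ)^2) := by
    have := Real.sqrt_le_sqrt (show (1:ℝ) ≤ 1 + (k:ℝ)^2 by nlinarith [sq_nonneg ((k:ℝ))])
    simpa using this
  rw [J, show (1:ℝ≥0∞) = ENNReal.ofReal 1 by simp]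
  exact ENNReal.ofReal_le_ofReal h1

lemma J_neg (k : ℤ) : J (-k) = J k := by simp [J]

/-- Cauchy–Schwarz for `ℝ≥0∞` tsums over `ℤ`. -/
lemma tsum_mul_le_CS (f g : ℤ → ℝ≥0∞) :
    ∑' k, f k * g k ≤
      (∑' k, f k ^ (2:ℝ)) ^ ((1:ℝ)/2) * (∑' k, g k ^ (2:ℝ)) ^ ((1:ℝ)/2) := by
  have hpq : Real.HolderConjugate 2 2 := Real.holderConjugate_iff.mpr ⟨by norm_num, by norm_num⟩
  have h := ENNReal.lintegral_mul_le_Lp_mul_Lq (Measure.count : Measure ℤ) hpq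
    (measurable_of_countable f).aemeasurable (measurable_of_countable g).aemeasurable
  simpa [lintegral_count] using h

/-- Minkowski (triangle) inequality for `ℝ≥0∞` tsums over `ℤ`, exponent 2. -/
lemma tsum_Lp_add (f g : ℤ → ℝ≥0∞) :
    (∑' k, (f k + g k) ^ (2:ℝ)) ^ ((1:ℝ)/2) ≤
      (∑' k, f k ^ (2:ℝ)) ^ ((1:ℝ)/2) + (∑' k, g k ^ (2:ℝ)) ^ ((1:ℝ)/2) := by
  have h := ENNReal.lintegral_Lp_add_le (μ := (Measure.count : Measure ℤ))
    (measurable_of_countable f).aemeasurable (measurable_of_countable g).aemeasurable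
    (one_le_two : (1:ℝ) ≤ 2)
  simpa [lintegral_count] using h

lemma pow_two_eq_rpow (x : ℝ≥0∞) : x ^ (2:ℕ) = x ^ (2:ℝ) := by
  rw [← ENNReal.rpow_natCast]; norm_num

/-- Trilinear estimate for resonant multipliers supported on `{k₁+k₂=0} ∪ {k₁+k₃=0}`
with one derivative loss in `k₁`, for `s ≥ 1/2`. -/
theorem trilinear_resonant_estimate (s : ℝ) (hs : 1 / 2 ≤ s) :
    ∃ C : ℝ, 0 < C ∧ ∀ N₁ : ℤ → ℤ → ℤ → ℝ≥0∞,
      (∀ k₁ k₂ k₃ : ℤ, N₁ k₁ k₂ k₃ ≤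
        J k₁ * ((if k₁ + k₂ = 0 then 1 else 0) + (if k₁ + k₃ = 0 then 1 else 0))) →
      ∀ v₁ v₂ v₃ : ℤ → ℝ≥0,
      (∑' k : ℤ, J k ^ (2 * s) *
          (∑' q : ℤ × ℤ × ℤ, if q.1 + q.2.1 + q.2.2 = k then
              N₁ q.1 q.2.1 q.2.2 * (v₁ q.1 : ℝ≥0∞) * (v₂ q.2.1 : ℝ≥0∞) * (v₃ q.2.2 : ℝ≥0∞)
            else 0) ^ (2 : ℕ)) ^ ((1 : ℝ) / 2)
      ≤ ENNReal.ofReal C *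
          ((∑' k : ℤ, J k ^ (2 * s) * (v₁ k : ℝ≥0∞) ^ (2 : ℕ)) ^ ((1 : ℝ) / 2) *
            (∑' k : ℤ, J k ^ (2 * s) * (v₂ k : ℝ≥0∞) ^ (2 : ℕ)) ^ ((1 : ℝ) / 2) *
            (∑' k : ℤ, J k ^ (2 * s) * (v₃ k : ℝ≥0∞) ^ (2 : ℕ)) ^ ((1 : ℝ) / 2)) := by
  refine ⟨2, by norm_num, ?_⟩
  intro N₁ hN v₁ v₂ v₃
  set w₁ : ℤ → ℝ≥0∞ := fun k => (v₁ k : ℝ≥0∞) with hw₁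
  set w₂ : ℤ → ℝ≥0∞ := fun k => (v₂ k : ℝ≥0∞) with hw₂
  set w₃ : ℤ → ℝ≥0∞ := fun k => (v₃ k : ℝ≥0∞) with hw₃
  -- abbreviations
  set S1 : ℝ≥0∞ := ∑' a : ℤ, J a * w₁ a * w₂ (-a) with hS1
  set S2 : ℝ≥0∞ := ∑' a : ℤ, J a * w₁ a * w₃ (-a) with hS2
  set A1 : ℝ≥0∞ := ∑' k : ℤ, J k ^ (2 * s) * w₁ k ^ (2 : ℕ) with hA1
  set A2 : ℝ≥0∞ := ∑' k : ℤ, J k ^ (2 * s) * w₂ k ^ (2 : ℕ) with hA2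
  set A3 : ℝ≥0∞ := ∑' k : ℤ, J k ^ (2 * s) * w₃ k ^ (2 : ℕ) with hA3
  have h2s : (1:ℝ) ≤ 2 * s := by linarith
  have hs0 : (0:ℝ) ≤ s := by linarith
  -- pointwise bound of inner convolution sum
  have hinner : ∀ k : ℤ,
      (∑' q : ℤ × ℤ × ℤ, if q.1 + q.2.1 + q.2.2 = k then
          N₁ q.1 q.2.1 q.2.2 * w₁ q.1 * w₂ q.2.1 * w₃ q.2.2 else 0)
        ≤ S1 * w₃ k + S2 * w₂ k := by
    intro k
    have hle : ∀ q : ℤ × ℤ × ℤ,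
        (if q.1 + q.2.1 + q.2.2 = k then
            N₁ q.1 q.2.1 q.2.2 * w₁ q.1 * w₂ q.2.1 * w₃ q.2.2 else 0)
        ≤ (if q.2.1 = -q.1 ∧ q.2.2 = k then J q.1 * w₁ q.1 * w₂ q.2.1 * w₃ q.2.2 else 0)
          + (if q.2.2 = -q.1 ∧ q.2.1 = k then J q.1 * w₁ q.1 * w₂ q.2.1 * w₃ q.2.2 else 0) := by
      rintro ⟨a, b, c⟩
      simp only
      by_cases h : a + b + c = k
      · rw [if_pos h]
        have step1 : N₁ a b c * w₁ a * w₂ b * w₃ c ≤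
            (J a * ((if a + b = 0 then 1 else 0) + (if a + c = 0 then 1 else 0)))
              * w₁ a * w₂ b * w₃ c := by
          gcongr
          exact hN a b c
        refine step1.trans ?_
        have expand : (J a * ((if a + b = 0 then (1:ℝ≥0∞) else 0) + (if a + c = 0 then 1 else 0)))
              * w₁ a * w₂ b * w₃ c
            = (if a + b = 0 then (1:ℝ≥0∞) else 0) * (J a * w₁ a * w₂ b * w₃ c)
              + (if a + c = 0 then (1:ℝ≥0∞) else 0) * (J a * w₁ a * w₂ b * w₃ c) := by
          ring
        rw [expand]
        gcongr
        · split_ifs with h1 h2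
          · exact le_of_eq (one_mul _)
          · exact absurd ⟨by omega, by omega⟩ h2
          · exact (zero_mul _).le.trans zero_le
          · simp
        · split_ifs with h1 h2
          · exact le_of_eq (one_mul _)
          · exact absurd ⟨by omega, by omega⟩ h2
          · exact (zero_mul _).le.trans zero_le
          · simp
      · rw [if_neg h]
        exact zero_le
    refine (ENNReal.tsum_le_tsum hle).trans ?_
    rw [ENNReal.tsum_add]
    gcongr
    · -- first piece equals S1 * w₃ k
      have : (∑' q : ℤ × ℤ × ℤ, if q.2.1 = -q.1 ∧ q.2.2 = k then
            J q.1 * w₁ q.1 * w₂ q.2.1 * w₃ q.2.2 else 0) = S1 * w₃ k := by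
        rw [ENNReal.tsum_prod']
        have hbc : ∀ a : ℤ, (∑' p : ℤ × ℤ, if p.1 = -a ∧ p.2 = k then
              J a * w₁ a * w₂ p.1 * w₃ p.2 else 0) = J a * w₁ a * w₂ (-a) * w₃ k := by
          intro a
          rw [ENNReal.tsum_prod']
          have hb : ∀ b : ℤ, (∑' c : ℤ, if b = -a ∧ c = k then
                J a * w₁ a * w₂ b * w₃ c else 0)
              = if b = -a then J a * w₁ a * w₂ b * w₃ k else 0 := by
            intro b
            by_cases hb : b = -a
            · simp only [hb, true_and, if_pos rfl]
              rw [tsum_eq_single k (fun c hc => if_neg hc)]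
              simp
            · simp [hb]
          rw [tsum_congr hb, tsum_eq_single (-a) (fun b hb => if_neg hb)]
          simp
        rw [tsum_congr hbc, ← ENNReal.tsum_mul_right]
      rw [this]
    · -- second piece equals S2 * w₂ k
      have : (∑' q : ℤ × ℤ × ℤ, if q.2.2 = -q.1 ∧ q.2.1 = k then
            J q.1 * w₁ q.1 * w₂ q.2.1 * w₃ q.2.2 else 0) = S2 * w₂ k := by
        rw [ENNReal.tsum_prod']
        have hbc : ∀ a : ℤ, (∑' p : ℤ × ℤ, if p.2 = -a ∧ p.1 = k then
              J a * w₁ a * w₂ p.1 * w₃ p.2 else 0) = J a * w₁ a * w₂ k * w₃ (-a) := by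
          intro a
          rw [ENNReal.tsum_prod']
          have hb : ∀ b : ℤ, (∑' c : ℤ, if c = -a ∧ b = k then
                J a * w₁ a * w₂ b * w₃ c else 0)
              = if b = k then J a * w₁ a * w₂ b * w₃ (-a) else 0 := by
            intro b
            by_cases hb : b = k
            · simp only [hb, and_true, if_pos rfl]
              rw [tsum_eq_single (-a) (fun c hc => if_neg hc)]
              simp
            · simp [hb]
          rw [tsum_congr hb, tsum_eq_single k (fun b hb => if_neg hb)]
          simp
        rw [tsum_congr hbc]
        have : ∀ a : ℤ, J a * w₁ a * w₂ k * w₃ (-a) = (J a * w₁ a * w₃ (-a)) * w₂ k := by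
          intro a; ring
        rw [tsum_congr this, ← ENNReal.tsum_mul_right]
      rw [this]
  -- Cauchy-Schwarz bounds for S1, S2
  have hSbound : ∀ w : ℤ → ℝ≥0∞,
      (∑' a : ℤ, J a * w₁ a * w (-a)) ≤
        A1 ^ ((1:ℝ)/2) * (∑' k : ℤ, J k ^ (2*s) * w k ^ (2:ℕ)) ^ ((1:ℝ)/2) := by
    intro w
    have hptwise : ∀ a : ℤ, J a * w₁ a * w (-a) ≤
        (J a ^ s * w₁ a) * (J a ^ s * w (-a)) := by
      intro a
      have hJ : J a ≤ J a ^ s * J a ^ s := by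
        rw [← ENNReal.rpow_add_of_nonneg _ _ hs0 hs0]
        calc J a = J a ^ (1:ℝ) := (ENNReal.rpow_one _).symm
        _ ≤ J a ^ (s + s) := ENNReal.rpow_le_rpow_of_exponent_le (one_le_J a) (by linarith)
      calc J a * w₁ a * w (-a) ≤ (J a ^ s * J a ^ s) * w₁ a * w (-a) := by gcongr
      _ = (J a ^ s * w₁ a) * (J a ^ s * w (-a)) := by ring
    refine (ENNReal.tsum_le_tsum hptwise).trans ?_
    refine (tsum_mul_le_CS _ _).trans ?_
    have e1 : (∑' a : ℤ, (J a ^ s * w₁ a) ^ (2:ℝ)) = A1 := by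
      rw [hA1]
      refine tsum_congr fun a => ?_
      rw [ENNReal.mul_rpow_of_nonneg _ _ (by norm_num : (0:ℝ) ≤ 2),
        ← ENNReal.rpow_mul, pow_two_eq_rpow, mul_comm s 2]
    have e2 : (∑' a : ℤ, (J a ^ s * w (-a)) ^ (2:ℝ))
        = ∑' k : ℤ, J k ^ (2*s) * w k ^ (2:ℕ) := by
      calc (∑' a : ℤ, (J a ^ s * w (-a)) ^ (2:ℝ))
          = ∑' m : ℤ, (J m ^ s * w m) ^ (2:ℝ) := by
            rw [← (Equiv.neg ℤ).tsum_eq (fun m => (J m ^ s * w m) ^ (2:ℝ))]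
            refine tsum_congr fun a => ?_
            simp only [Equiv.neg_apply, J_neg]
        _ = ∑' k : ℤ, J k ^ (2*s) * w k ^ (2:ℕ) := by
            refine tsum_congr fun a => ?_
            rw [ENNReal.mul_rpow_of_nonneg _ _ (by norm_num : (0:ℝ) ≤ 2),
              ← ENNReal.rpow_mul, pow_two_eq_rpow, mul_comm s 2]
    rw [e1, e2]
  have hS1le : S1 ≤ A1 ^ ((1:ℝ)/2) * A2 ^ ((1:ℝ)/2) := by
    rw [hS1, hA2]; exact hSbound w₂
  have hS2le : S2 ≤ A1 ^ ((1:ℝ)/2) * A3 ^ ((1:ℝ)/2) := by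
    rw [hS2, hA3]; exact hSbound w₃
  -- main chain
  have hmain : (∑' k : ℤ, J k ^ (2 * s) *
      (∑' q : ℤ × ℤ × ℤ, if q.1 + q.2.1 + q.2.2 = k then
          N₁ q.1 q.2.1 q.2.2 * w₁ q.1 * w₂ q.2.1 * w₃ q.2.2 else 0) ^ (2 : ℕ)) ^ ((1:ℝ)/2)
      ≤ S1 * A3 ^ ((1:ℝ)/2) + S2 * A2 ^ ((1:ℝ)/2) := by
    have step1 : (∑' k : ℤ, J k ^ (2 * s) *
        (∑' q : ℤ × ℤ × ℤ, if q.1 + q.2.1 + q.2.2 = k then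
            N₁ q.1 q.2.1 q.2.2 * w₁ q.1 * w₂ q.2.1 * w₃ q.2.2 else 0) ^ (2 : ℕ))
        ≤ ∑' k : ℤ, ((J k ^ s * (S1 * w₃ k)) + (J k ^ s * (S2 * w₂ k))) ^ (2:ℝ) := by
      refine ENNReal.tsum_le_tsum fun k => ?_
      have hWk : J k ^ (2 * s) = (J k ^ s) ^ (2:ℝ) := by
        rw [mul_comm, ENNReal.rpow_mul]
      calc J k ^ (2 * s) * (∑' q : ℤ × ℤ × ℤ, if q.1 + q.2.1 + q.2.2 = k then
            N₁ q.1 q.2.1 q.2.2 * w₁ q.1 * w₂ q.2.1 * w₃ q.2.2 else 0) ^ (2 : ℕ)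
          ≤ J k ^ (2 * s) * (S1 * w₃ k + S2 * w₂ k) ^ (2:ℕ) := by
            gcongr
            exact hinner k
        _ = ((J k ^ s * (S1 * w₃ k)) + (J k ^ s * (S2 * w₂ k))) ^ (2:ℝ) := by
            rw [pow_two_eq_rpow, hWk,
              ← ENNReal.mul_rpow_of_nonneg _ _ (by norm_num : (0:ℝ) ≤ 2), mul_add]
    refine (ENNReal.rpow_le_rpow step1 (by norm_num)).trans ?_
    refine (tsum_Lp_add _ _).trans ?_
    have f1 : (∑' k : ℤ, (J k ^ s * (S1 * w₃ k)) ^ (2:ℝ)) ^ ((1:ℝ)/2)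
        = S1 * A3 ^ ((1:ℝ)/2) := by
      have : ∀ k : ℤ, (J k ^ s * (S1 * w₃ k)) ^ (2:ℝ)
          = S1 ^ (2:ℝ) * (J k ^ (2*s) * w₃ k ^ (2:ℕ)) := by
        intro k
        rw [ENNReal.mul_rpow_of_nonneg _ _ (by norm_num : (0:ℝ) ≤ 2),
          ENNReal.mul_rpow_of_nonneg _ _ (by norm_num : (0:ℝ) ≤ 2),
          ← ENNReal.rpow_mul, pow_two_eq_rpow (w₃ k), mul_comm s 2]
        ring
      rw [tsum_congr this, ENNReal.tsum_mul_left, hA3,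
        ENNReal.mul_rpow_of_nonneg _ _ (by norm_num : (0:ℝ) ≤ (1:ℝ)/2),
        ← ENNReal.rpow_mul]
      norm_num
    have f2 : (∑' k : ℤ, (J k ^ s * (S2 * w₂ k)) ^ (2:ℝ)) ^ ((1:ℝ)/2)
        = S2 * A2 ^ ((1:ℝ)/2) := by
      have : ∀ k : ℤ, (J k ^ s * (S2 * w₂ k)) ^ (2:ℝ)
          = S2 ^ (2:ℝ) * (J k ^ (2*s) * w₂ k ^ (2:ℕ)) := by
        intro k
        rw [ENNReal.mul_rpow_of_nonneg _ _ (by norm_num : (0:ℝ) ≤ 2),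
          ENNReal.mul_rpow_of_nonneg _ _ (by norm_num : (0:ℝ) ≤ 2),
          ← ENNReal.rpow_mul, pow_two_eq_rpow (w₂ k), mul_comm s 2]
        ring
      rw [tsum_congr this, ENNReal.tsum_mul_left, hA2,
        ENNReal.mul_rpow_of_nonneg _ _ (by norm_num : (0:ℝ) ≤ (1:ℝ)/2),
        ← ENNReal.rpow_mul]
      norm_num
    rw [f1, f2]
  refine hmain.trans ?_
  have : S1 * A3 ^ ((1:ℝ)/2) + S2 * A2 ^ ((1:ℝ)/2)
      ≤ 2 * (A1 ^ ((1:ℝ)/2) * A2 ^ ((1:ℝ)/2) * A3 ^ ((1:ℝ)/2)) := by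
    calc S1 * A3 ^ ((1:ℝ)/2) + S2 * A2 ^ ((1:ℝ)/2)
        ≤ (A1 ^ ((1:ℝ)/2) * A2 ^ ((1:ℝ)/2)) * A3 ^ ((1:ℝ)/2)
          + (A1 ^ ((1:ℝ)/2) * A3 ^ ((1:ℝ)/2)) * A2 ^ ((1:ℝ)/2) := by gcongr
      _ = 2 * (A1 ^ ((1:ℝ)/2) * A2 ^ ((1:ℝ)/2) * A3 ^ ((1:ℝ)/2)) := by ring
  refine this.trans_eq ?_
  rw [show ENNReal.ofReal 2 = 2 by norm_num]
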